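/- arXiv:2107.10663 — 2 statements merged into one kernel-verified Lean document; each statement's English description precedes it below -/
import Mathlib

section
/- For matrices A₁,…,A_K with operator norms bounded by ρ₁,…,ρ_K and nonnegative weights p₁,…,p_K summing to 1, the difference Σᵢ pᵢ exp(-ητAᵢ) − exp(-ητ Σᵢ pᵢAᵢ) equals (η²τ²/2)(Σᵢ pᵢAᵢ² − (Σᵢ pᵢAᵢ)²) + E, where the remainder E has operator norm at most C·η³τ³ for a constant C depending only on the ρᵢ (for ητ ≤ 1). -/
open scoped BigOperators
open NormedSpace

section Helper

variable {𝔸 : Type*} [NormedRing 𝔸] [NormedAlgebra ℝ 𝔸] [CompleteSpace 𝔸]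

/-- Second-order Taylor remainder bound for the exponential. -/
lemma exp_taylor2_bound (X : 𝔸) :
    ‖exp X - 1 - X - (2⁻¹ : ℝ) • X ^ 2‖ ≤ ‖X‖ ^ 3 * Real.exp ‖X‖ := by
  have hsum : Summable fun n : ℕ => ((n.factorial)⁻¹ : ℝ) • X ^ n :=
    expSeries_summable' (𝕂 := ℝ) X
  have hsplit := Summable.sum_add_tsum_nat_add 3 hsum
  have hexp : exp X = ∑' n : ℕ, ((n.factorial)⁻¹ : ℝ) • X ^ n := by
    rw [exp_eq_tsum ℝ]
  have hhead : ∑ n ∈ Finset.range 3, ((n.factorial)⁻¹ : ℝ) • X ^ n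
      = 1 + X + (2⁻¹ : ℝ) • X ^ 2 := by
    simp [Finset.sum_range_succ, Nat.factorial]
  have hrem : exp X - 1 - X - (2⁻¹ : ℝ) • X ^ 2
      = ∑' n : ℕ, (((n + 3).factorial)⁻¹ : ℝ) • X ^ (n + 3) := by
    rw [hexp, ← hsplit, hhead]; abel
  rw [hrem]
  have hsum2 : Summable fun n : ℕ => ‖X‖ ^ 3 * (‖X‖ ^ n / n.factorial) :=
    (Real.summable_pow_div_factorial ‖X‖).mul_left _
  have hbound : ∀ n : ℕ, ‖(((n + 3).factorial)⁻¹ : ℝ) • X ^ (n + 3)‖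
      ≤ ‖X‖ ^ 3 * (‖X‖ ^ n / n.factorial) := by
    intro n
    have hns := norm_smul ((((n + 3).factorial)⁻¹ : ℝ)) (X ^ (n + 3))
    have h1 : ‖(((n + 3).factorial)⁻¹ : ℝ) • X ^ (n + 3)‖
        ≤ (((n + 3).factorial)⁻¹ : ℝ) * ‖X‖ ^ (n + 3) := by
      rw [hns, Real.norm_eq_abs, abs_of_nonneg (by positivity)]
      gcongr
      exact norm_pow_le' X (by omega)
    refine h1.trans ?_
    have hfac : (n.factorial : ℝ) ≤ ((n + 3).factorial : ℝ) := by
      exact_mod_cast Nat.factorial_le (by omega)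
    have hfacpos : (0 : ℝ) < n.factorial := by positivity
    have hinv : (((n + 3).factorial)⁻¹ : ℝ) ≤ (n.factorial : ℝ)⁻¹ := by
      apply inv_anti₀ hfacpos hfac
    calc (((n + 3).factorial)⁻¹ : ℝ) * ‖X‖ ^ (n + 3)
        ≤ (n.factorial : ℝ)⁻¹ * ‖X‖ ^ (n + 3) := by gcongr
      _ = ‖X‖ ^ 3 * (‖X‖ ^ n / n.factorial) := by ring
  calc ‖∑' n : ℕ, (((n + 3).factorial)⁻¹ : ℝ) • X ^ (n + 3)‖
      ≤ ∑' n : ℕ, ‖X‖ ^ 3 * (‖X‖ ^ n / n.factorial) := by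
        apply tsum_of_norm_bounded hsum2.hasSum hbound
    _ = ‖X‖ ^ 3 * ∑' n : ℕ, ‖X‖ ^ n / n.factorial := tsum_mul_left
    _ = ‖X‖ ^ 3 * Real.exp ‖X‖ := by rw [Real.exp_eq_exp_ℝ, exp_eq_tsum_div]

end Helper

set_option synthInstance.maxHeartbeats 1000000 in
set_option maxHeartbeats 1000000 in
/-- average of exponentials vs exponential of average, with an explicit
second-order variance term and a third-order remainder whose size depends only on the
norm bounds `ρᵢ` (for `ητ ≤ 1`). -/
theorem avg_exp_sub_exp_avg
    {E : Type*} [NormedAddCommGroup E] [InnerProductSpace ℝ E] [FiniteDimensional ℝ E]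
    (K : ℕ) (ρ : Fin K → ℝ) :
    ∃ C : ℝ, ∀ (A : Fin K → (E →L[ℝ] E)) (p : Fin K → ℝ) (η τ : ℝ),
      (∀ i, ‖A i‖ ≤ ρ i) → (∀ i, 0 ≤ p i) → (∑ i, p i = 1) →
      0 ≤ η → 0 ≤ τ → η * τ ≤ 1 →
      ‖(∑ i, p i • exp (-(η * τ) • A i)) - exp (-(η * τ) • ∑ i, p i • A i)
          - (η ^ 2 * τ ^ 2 / 2) • ((∑ i, p i • (A i) ^ 2) - (∑ i, p i • A i) ^ 2)‖
        ≤ C * η ^ 3 * τ ^ 3 := by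
  set M : ℝ := ∑ i, |ρ i| with hM
  refine ⟨(∑ i, |ρ i| ^ 3 * Real.exp |ρ i|) + M ^ 3 * Real.exp M,
    fun A p η τ hA hp hps hη hτ hητ => ?_⟩
  set t : ℝ := η * τ with ht
  have htnn : 0 ≤ t := mul_nonneg hη hτ
  set R : (E →L[ℝ] E) → (E →L[ℝ] E) :=
    fun X => exp X - 1 - X - (2⁻¹ : ℝ) • X ^ 2 with hR
  have hexp : ∀ X : E →L[ℝ] E, exp X = R X + 1 + X + (2⁻¹ : ℝ) • X ^ 2 := by
    intro X; simp only [hR]; abel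
  have hsq : ∀ X : E →L[ℝ] E, (-t • X) ^ 2 = (t ^ 2) • X ^ 2 := by
    intro X; rw [smul_pow]; ring_nf
  set Abar : E →L[ℝ] E := ∑ i, p i • A i with hAbar
  -- key algebraic identity
  have hterm1 : ∀ i, p i • exp (-t • A i)
      = p i • R (-t • A i) + p i • (1 : E →L[ℝ] E) + (-(p i * t)) • A i
        + (t ^ 2 / 2 * p i) • (A i) ^ 2 := by
    intro i
    rw [hexp, hsq]
    module
  have h1 : ∑ i, p i • exp (-t • A i)
      = (∑ i, p i • R (-t • A i)) + 1 + (-t • Abar)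
        + (t ^ 2 / 2) • ∑ i, p i • (A i) ^ 2 := by
    rw [Finset.sum_congr rfl (fun i _ => hterm1 i)]
    simp only [Finset.sum_add_distrib]
    congr 1
    · congr 1
      · congr 1
        · rw [← Finset.sum_smul, hps, one_smul]
      · rw [hAbar, Finset.smul_sum]
        refine Finset.sum_congr rfl fun i _ => ?_
        module
    · rw [Finset.smul_sum]
      refine Finset.sum_congr rfl fun i _ => ?_
      module
  have h2 : exp (-t • Abar)
      = R (-t • Abar) + 1 + (-t • Abar) + (t ^ 2 / 2) • Abar ^ 2 := by
    rw [hexp, hsq]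
    module
  have ht2 : η ^ 2 * τ ^ 2 / 2 = t ^ 2 / 2 := by rw [ht]; ring
  have key : (∑ i, p i • exp (-t • A i)) - exp (-t • Abar)
      - (η ^ 2 * τ ^ 2 / 2) • ((∑ i, p i • (A i) ^ 2) - Abar ^ 2)
      = (∑ i, p i • R (-t • A i)) - R (-t • Abar) := by
    rw [h1, h2, ht2, smul_sub]
    abel
  rw [hAbar] at key ⊢
  rw [key]
  -- norm bounds
  have hρnn : ∀ i, 0 ≤ ρ i := fun i => (norm_nonneg _).trans (hA i)
  have hp1 : ∀ i, p i ≤ 1 := by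
    intro i
    rw [← hps]
    exact Finset.single_le_sum (fun j _ => hp j) (Finset.mem_univ i)
  have hRb : ∀ (X : E →L[ℝ] E) (r : ℝ), ‖X‖ ≤ t * r → 0 ≤ r →
      ‖R X‖ ≤ t ^ 3 * (r ^ 3 * Real.exp r) := by
    intro X r hXr hr
    refine (exp_taylor2_bound X).trans ?_
    have hXr' : ‖X‖ ≤ r := hXr.trans (by nlinarith)
    have h3 : ‖X‖ ^ 3 ≤ (t * r) ^ 3 := pow_le_pow_left₀ (norm_nonneg X) hXr 3
    have he : Real.exp ‖X‖ ≤ Real.exp r := Real.exp_le_exp.mpr hXr'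
    calc ‖X‖ ^ 3 * Real.exp ‖X‖ ≤ (t * r) ^ 3 * Real.exp r := by
          apply mul_le_mul h3 he (Real.exp_nonneg _) (by positivity)
      _ = t ^ 3 * (r ^ 3 * Real.exp r) := by ring
  have hMnn : 0 ≤ M := Finset.sum_nonneg fun i _ => abs_nonneg _
  have hbar : ‖R (-t • ∑ i, p i • A i)‖ ≤ t ^ 3 * (M ^ 3 * Real.exp M) := by
    apply hRb _ M _ hMnn
    have hns := norm_smul (-t) (∑ i, p i • A i)
    rw [hns, Real.norm_eq_abs, abs_neg, abs_of_nonneg htnn]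
    gcongr
    calc ‖∑ i, p i • A i‖ ≤ ∑ i, ‖p i • A i‖ := norm_sum_le _ _
      _ ≤ ∑ i, |ρ i| := by
          apply Finset.sum_le_sum
          intro i _
          rw [norm_smul (p i) (A i), Real.norm_eq_abs, abs_of_nonneg (hp i)]
          calc p i * ‖A i‖ ≤ 1 * ρ i := by
                apply mul_le_mul (hp1 i) (hA i) (norm_nonneg _) zero_le_one
            _ ≤ |ρ i| := by rw [one_mul]; exact le_abs_self _
  have hterm : ∀ i, ‖p i • R (-t • A i)‖ ≤ t ^ 3 * (|ρ i| ^ 3 * Real.exp |ρ i|) := by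
    intro i
    rw [norm_smul (p i) (R (-t • A i)), Real.norm_eq_abs, abs_of_nonneg (hp i)]
    have hRi : ‖R (-t • A i)‖ ≤ t ^ 3 * (|ρ i| ^ 3 * Real.exp |ρ i|) := by
      apply hRb _ (|ρ i|) _ (abs_nonneg _)
      have hns := norm_smul (-t) (A i)
      rw [hns, Real.norm_eq_abs, abs_neg, abs_of_nonneg htnn]
      gcongr
      exact (hA i).trans (le_abs_self _)
    calc p i * ‖R (-t • A i)‖ ≤ 1 * (t ^ 3 * (|ρ i| ^ 3 * Real.exp |ρ i|)) := by
          apply mul_le_mul (hp1 i) hRi (norm_nonneg _) zero_le_one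
      _ = _ := one_mul _
  calc ‖(∑ i, p i • R (-t • A i)) - R (-t • ∑ i, p i • A i)‖
      ≤ ‖∑ i, p i • R (-t • A i)‖ + ‖R (-t • ∑ i, p i • A i)‖ := norm_sub_le _ _
    _ ≤ (∑ i, t ^ 3 * (|ρ i| ^ 3 * Real.exp |ρ i|)) + t ^ 3 * (M ^ 3 * Real.exp M) := by
        gcongr
        exact (norm_sum_le _ _).trans (Finset.sum_le_sum fun i _ => hterm i)
    _ = ((∑ i, |ρ i| ^ 3 * Real.exp |ρ i|) + M ^ 3 * Real.exp M) * t ^ 3 := by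
        rw [← Finset.mul_sum]; ring
    _ = _ := by rw [ht]; ring
end

section
/- Let U be a linear operator on a finite-dimensional inner product space V of the form U = (I + (τ²η²/2) B) exp(-ητKΠ), where Π is positive semidefinite and B commutes with the orthogonal projection onto ker(Π) and vanishes on ker(Π). If (1 + (τ²η²/2)‖B‖)·exp(-ητK λ_min⁺(Π)) < 1, where λ_min⁺(Π) is the smallest nonzero eigenvalue of Π, then for every f in the orthogonal complement of ker(Π), U^n f → 0 as n → ∞, while U f = f for every f ∈ ker(Π). -/
open NormedSpace Filter
open scoped RealInnerProductSpace Topology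

lemma exp_apply_eigenvector' {V : Type*} [NormedAddCommGroup V] [NormedSpace ℝ V]
    [CompleteSpace V] (A : V →L[ℝ] V) (v : V) (c : ℝ) (h : A v = c • v) :
    exp A v = Real.exp c • v := by
  have hp : ∀ n : ℕ, (A ^ n) v = c ^ n • v := by
    intro n; induction n with
    | zero => simp
    | succ n ih =>
        rw [pow_succ, ContinuousLinearMap.mul_apply, h, map_smul, ih, smul_smul, pow_succ,
          mul_comm]
  have hs : Summable fun n : ℕ => (n.factorial : ℝ)⁻¹ • A ^ n := expSeries_summable' (𝕂 := ℝ) A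
  have hs2 : Summable fun n : ℕ => (n.factorial : ℝ)⁻¹ * c ^ n := by
    simpa [smul_eq_mul] using expSeries_summable' (𝕂 := ℝ) c
  calc exp A v = (∑' n : ℕ, (n.factorial : ℝ)⁻¹ • A ^ n) v := by rw [exp_eq_tsum ℝ]
    _ = ∑' n : ℕ, ((n.factorial : ℝ)⁻¹ • A ^ n) v :=
        (ContinuousLinearMap.apply ℝ V v).map_tsum hs
    _ = ∑' n : ℕ, ((n.factorial : ℝ)⁻¹ * c ^ n) • v := by
        simp [ContinuousLinearMap.smul_apply, hp, smul_smul]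
    _ = (∑' n : ℕ, (n.factorial : ℝ)⁻¹ * c ^ n) • v := by rw [hs2.tsum_smul_const]
    _ = Real.exp c • v := by
        rw [Real.exp_eq_exp_ℝ, exp_eq_tsum ℝ]; simp [smul_eq_mul]

/-- the federated update operator `U = (I + (τ²η²/2)B)·exp(-ητKΠ)` fixes the
kernel of `Π` and is asymptotically contracting on its orthogonal complement provided
`(1 + (τ²η²/2)‖B‖)·exp(-ητK λ_min⁺(Π)) < 1`. -/
theorem federated_update_contraction
    {V : Type*} [NormedAddCommGroup V] [InnerProductSpace ℝ V] [FiniteDimensional ℝ V]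
    (Pm B : V →L[ℝ] V) (η τ K lam : ℝ)
    (hη : 0 < η) (hτ : 0 < τ) (hK : 0 < K) (hlam : 0 < lam)
    (hPmsa : IsSelfAdjoint Pm) (hPmpsd : ∀ v : V, 0 ≤ ⟪Pm v, v⟫)
    (hBsa : IsSelfAdjoint B)
    (hBker : ∀ f ∈ LinearMap.ker (Pm : V →ₗ[ℝ] V), B f = 0)
    (hBinv : ∀ f ∈ (LinearMap.ker (Pm : V →ₗ[ℝ] V))ᗮ, B f ∈ (LinearMap.ker (Pm : V →ₗ[ℝ] V))ᗮ)
    -- `lam` is a lower bound for `Π` away from its kernel (the smallest nonzero eigenvalue)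
    (hlam_min : ∀ f ∈ (LinearMap.ker (Pm : V →ₗ[ℝ] V))ᗮ, lam * ‖f‖ ^ 2 ≤ ⟪Pm f, f⟫)
    (hcontr : (1 + τ ^ 2 * η ^ 2 / 2 * ‖B‖) * Real.exp (-(η * τ * K * lam)) < 1) :
    (∀ f ∈ LinearMap.ker (Pm : V →ₗ[ℝ] V),
        (((1 + (τ ^ 2 * η ^ 2 / 2) • B) * exp (-(η * τ * K) • Pm) : V →L[ℝ] V)) f = f) ∧
    (∀ f ∈ (LinearMap.ker (Pm : V →ₗ[ℝ] V))ᗮ,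
        Tendsto (fun n : ℕ =>
          ((((1 + (τ ^ 2 * η ^ 2 / 2) • B) * exp (-(η * τ * K) • Pm) : V →L[ℝ] V)) ^ n) f)
          atTop (nhds 0)) := by
  set s : ℝ := η * τ * K with hs_def
  have hs_pos : 0 < s := by positivity
  set c : ℝ := τ ^ 2 * η ^ 2 / 2 with hc_def
  have hc_nonneg : 0 ≤ c := by positivity
  set E : V →L[ℝ] V := exp (-s • Pm) with hE_def
  set U : V →L[ℝ] V := (1 + c • B) * E with hU_def
  -- E fixes the kernel
  have hEker : ∀ f ∈ LinearMap.ker (Pm : V →ₗ[ℝ] V), E f = f := by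
    intro f hf
    have h0 : (-s • Pm) f = (0 : ℝ) • f := by
      simp [ContinuousLinearMap.smul_apply, (show Pm f = 0 from LinearMap.mem_ker.mp hf)]
    have := exp_apply_eigenvector' (-s • Pm) f 0 h0
    rw [hE_def]
    simpa using this
  have part1 : ∀ f ∈ LinearMap.ker (Pm : V →ₗ[ℝ] V), U f = f := by
    intro f hf
    rw [hU_def, ContinuousLinearMap.mul_apply, hEker f hf]
    simp [ContinuousLinearMap.add_apply, ContinuousLinearMap.smul_apply, hBker f hf]
  -- E is self-adjoint
  have hEsa : IsSelfAdjoint E := by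
    have h1 : IsSelfAdjoint (-s • Pm) := IsSelfAdjoint.smul (star_trivial _) hPmsa
    rw [hE_def]
    exact h1.exp
  have hinner : ∀ x y : V, ⟪E x, y⟫ = ⟪x, E y⟫ := fun x y => hEsa.isSymmetric x y
  have hEinv : ∀ g ∈ (LinearMap.ker (Pm : V →ₗ[ℝ] V))ᗮ, E g ∈ (LinearMap.ker (Pm : V →ₗ[ℝ] V))ᗮ := by
    intro g hg
    rw [Submodule.mem_orthogonal]
    intro k hk
    rw [← hinner k g, hEker k hk]
    exact (Submodule.mem_orthogonal _ _).mp hg k hk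
  -- spectral decomposition of Pm
  have hsym := hPmsa.isSymmetric
  set N := Module.finrank ℝ V with hN_def
  have hN : Module.finrank ℝ V = N := rfl
  set b := hsym.eigenvectorBasis hN with hb_def
  set μ := hsym.eigenvalues hN with hμ_def
  have hb : ∀ i, Pm (b i) = μ i • b i := fun i =>
    (hsym.hasEigenvector_eigenvectorBasis hN i).apply_eq_smul
  have hbnorm : ∀ i, ‖b i‖ = 1 := fun i => b.orthonormal.1 i
  have hEb : ∀ i, E (b i) = Real.exp (-(s * μ i)) • b i := by
    intro i
    rw [hE_def]
    apply exp_apply_eigenvector'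
    rw [ContinuousLinearMap.smul_apply, hb i, smul_smul]
    ring_nf
  have hμ_cases : ∀ i, μ i = 0 ∨ lam ≤ μ i := by
    intro i
    by_cases h0 : μ i = 0
    · exact Or.inl h0
    · right
      have hmem : b i ∈ (LinearMap.ker (Pm : V →ₗ[ℝ] V))ᗮ := by
        rw [Submodule.mem_orthogonal]
        intro k hk
        have h1 : ⟪Pm (b i), k⟫ = ⟪b i, Pm k⟫ := hsym (b i) k
        rw [(show Pm k = 0 from LinearMap.mem_ker.mp hk)] at h1
        rw [hb i, real_inner_smul_left] at h1
        simp only [inner_zero_right] at h1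
        have h2 : ⟪b i, k⟫ = 0 := by
          rcases mul_eq_zero.mp h1 with h | h
          · exact absurd h h0
          · exact h
        rw [real_inner_comm]
        exact h2
      have h2 := hlam_min (b i) hmem
      rw [hb i, real_inner_smul_left, real_inner_self_eq_norm_sq, hbnorm i] at h2
      nlinarith
  -- norm bound for E on the orthogonal complement
  have hEbound : ∀ g ∈ (LinearMap.ker (Pm : V →ₗ[ℝ] V))ᗮ, ‖E g‖ ≤ Real.exp (-(s * lam)) * ‖g‖ := by
    intro g hg
    have hcoef : ∀ i, ⟪b i, E g⟫ = Real.exp (-(s * μ i)) * ⟪b i, g⟫ := by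
      intro i
      rw [← hinner (b i) g, hEb i, real_inner_smul_left]
    have hcoef_le : ∀ i, |⟪b i, E g⟫| ≤ Real.exp (-(s * lam)) * |⟪b i, g⟫| := by
      intro i
      rcases hμ_cases i with h0 | hge
      · have hbmem : b i ∈ LinearMap.ker (Pm : V →ₗ[ℝ] V) := by
          rw [LinearMap.mem_ker]
          have := hb i
          rw [h0, zero_smul] at this
          exact this
        have hz : ⟪b i, g⟫ = 0 := (Submodule.mem_orthogonal _ _).mp hg (b i) hbmem
        rw [hcoef i, hz]
        simp
      · rw [hcoef i, abs_mul, abs_of_pos (Real.exp_pos _)]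
        apply mul_le_mul_of_nonneg_right _ (abs_nonneg _)
        apply Real.exp_le_exp.mpr
        nlinarith
    have hnorm : ∀ x : V, ‖x‖ ^ 2 = ∑ i, ⟪b i, x⟫ ^ 2 := by
      intro x
      have h1 : ‖x‖ = ‖b.repr x‖ := (b.repr.norm_map x).symm
      rw [h1, EuclideanSpace.norm_eq, Real.sq_sqrt (by positivity)]
      refine Finset.sum_congr rfl fun i _ => ?_
      rw [b.repr_apply_apply, Real.norm_eq_abs, sq_abs]
    have hsum : ‖E g‖ ^ 2 ≤ (Real.exp (-(s * lam)) * ‖g‖) ^ 2 := by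
      rw [hnorm (E g), mul_pow, hnorm g, Finset.mul_sum]
      apply Finset.sum_le_sum
      intro i _
      calc ⟪b i, E g⟫ ^ 2 = |⟪b i, E g⟫| ^ 2 := (sq_abs _).symm
        _ ≤ (Real.exp (-(s * lam)) * |⟪b i, g⟫|) ^ 2 :=
            pow_le_pow_left₀ (abs_nonneg _) (hcoef_le i) 2
        _ = Real.exp (-(s * lam)) ^ 2 * ⟪b i, g⟫ ^ 2 := by rw [mul_pow, sq_abs]
    nlinarith [norm_nonneg (E g), mul_nonneg (Real.exp_pos (-(s * lam))).le (norm_nonneg g)]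
  -- the contraction factor
  set r : ℝ := (1 + c * ‖B‖) * Real.exp (-(s * lam)) with hr_def
  have hr_nonneg : 0 ≤ r := by positivity
  have hr_lt : r < 1 := by
    rw [hr_def]
    exact hcontr
  have hstep : ∀ g ∈ (LinearMap.ker (Pm : V →ₗ[ℝ] V))ᗮ,
      U g ∈ (LinearMap.ker (Pm : V →ₗ[ℝ] V))ᗮ ∧ ‖U g‖ ≤ r * ‖g‖ := by
    intro g hg
    have hEg := hEinv g hg
    have hUg : U g = E g + c • B (E g) := by
      rw [hU_def, ContinuousLinearMap.mul_apply]
      simp [ContinuousLinearMap.add_apply, ContinuousLinearMap.smul_apply]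
    constructor
    · rw [hUg]
      exact Submodule.add_mem _ hEg (Submodule.smul_mem _ _ (hBinv _ hEg))
    · rw [hUg]
      calc ‖E g + c • B (E g)‖ ≤ ‖E g‖ + ‖c • B (E g)‖ := norm_add_le _ _
        _ ≤ ‖E g‖ + c * (‖B‖ * ‖E g‖) := by
            rw [norm_smul, Real.norm_eq_abs, abs_of_nonneg hc_nonneg]
            exact add_le_add_right (mul_le_mul_of_nonneg_left (B.le_opNorm _) hc_nonneg) _
        _ = (1 + c * ‖B‖) * ‖E g‖ := by ring
        _ ≤ (1 + c * ‖B‖) * (Real.exp (-(s * lam)) * ‖g‖) :=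
            mul_le_mul_of_nonneg_left (hEbound g hg) (by positivity)
        _ = r * ‖g‖ := by rw [hr_def]; ring
  refine ⟨part1, ?_⟩
  intro f hf
  have hiter : ∀ n : ℕ, (U ^ n) f ∈ (LinearMap.ker (Pm : V →ₗ[ℝ] V))ᗮ ∧ ‖(U ^ n) f‖ ≤ r ^ n * ‖f‖ := by
    intro n; induction n with
    | zero => simpa using hf
    | succ n ih =>
        obtain ⟨hmem, hle⟩ := ih
        obtain ⟨hmem', hle'⟩ := hstep _ hmem
        have h1 : (U ^ (n + 1)) f = U ((U ^ n) f) := by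
          rw [pow_succ', ContinuousLinearMap.mul_apply]
        refine ⟨by rw [h1]; exact hmem', ?_⟩
        rw [h1]
        calc ‖U ((U ^ n) f)‖ ≤ r * ‖(U ^ n) f‖ := hle'
          _ ≤ r * (r ^ n * ‖f‖) := mul_le_mul_of_nonneg_left hle hr_nonneg
          _ = r ^ (n + 1) * ‖f‖ := by ring
  rw [tendsto_zero_iff_norm_tendsto_zero]
  apply squeeze_zero (fun n => norm_nonneg _) (fun n => (hiter n).2)
  have h2 : Tendsto (fun n : ℕ => r ^ n) atTop (𝓝 0) :=
    tendsto_pow_atTop_nhds_zero_of_lt_one hr_nonneg hr_lt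
  simpa using h2.mul_const ‖f‖
end
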